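/- If b ∈ ℝ^m is decreasing with |b(i)| ≤ 1 for all i, and σ is a permutation of {1,…,m} with σ_*(b) = b, then σ_*(q*) = q* where q* is the supervertex of P(b). -/

import Mathlib

open Finset

/-- The value λ(k) for λ ∈ Λ = {0,1}^m, extended by the conventions λ(0) = 0 and
λ(m+1) = 1 (positions 1,…,m carry the actual values of λ). -/
def lamExt (m : ℕ) (lam : Fin m → Bool) (k : ℕ) : ℕ :=
  if h : 1 ≤ k ∧ k ≤ m then (if lam ⟨k - 1, by omega⟩ then 1 else 0)
  else if k = 0 then 0 else 1

/-- b extended by the conventions b(0) = 1 and b(m+1) = −1. -/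
noncomputable def bext (m : ℕ) (b : ℕ → ℝ) (k : ℕ) : ℝ :=
  if k = 0 then 1 else if k ≤ m then b k else -1

/-- b'(i) = (b(i) − b(i+1))/2 for 0 ≤ i ≤ m. -/
noncomputable def b' (m : ℕ) (b : ℕ → ℝ) (i : ℕ) : ℝ :=
  (bext m b i - bext m b (i + 1)) / 2

/-- μ_i ∈ Λ: μ_i(k) = 0 for k ≤ i, μ_i(k) = 1 for k ≥ i+1. -/
def mu (m i : ℕ) : Fin m → Bool := fun k => decide (i ≤ (k : ℕ))

/-- The supervertex q* = Σ_{i=0}^m b'(i)·e_{μ_i} (decreasing case). -/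
noncomputable def supervertexDec (m : ℕ) (b : ℕ → ℝ) : (Fin m → Bool) → ℝ :=
  fun lam => ∑ i ∈ Finset.range (m + 1), b' m b i * (if lam = mu m i then 1 else 0)

/-- The induced action σ_*(x)(λ) = x(λ∘σ) on ℝ^Λ. -/
def act (m : ℕ) (σ : Equiv.Perm (Fin m)) (x : (Fin m → Bool) → ℝ) :
    (Fin m → Bool) → ℝ := fun lam => x (lam ∘ σ)

lemma bext_zero (m : ℕ) (b : ℕ → ℝ) : bext m b 0 = 1 := by simp [bext]

lemma bext_mid (m : ℕ) (b : ℕ → ℝ) (k : ℕ) (h1 : 1 ≤ k) (h2 : k ≤ m) :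
    bext m b k = b k := by
  rw [bext, if_neg (by omega), if_pos h2]

lemma bext_top (m : ℕ) (b : ℕ → ℝ) : bext m b (m + 1) = -1 := by
  rw [bext, if_neg (by omega), if_neg (by omega)]

/-- If b is decreasing with |b(i)| ≤ 1, and σ is a permutation of {1,…,m} with
σ_*(b) = b (i.e. b(σ^{−1}(i)) = b(i) for all i), then σ_*(q*) = q*. -/
theorem stmt10 (m : ℕ) (b : ℕ → ℝ) (hb : ∀ i ∈ Finset.Icc 1 m, |b i| ≤ 1)
    (hdec : ∀ i j, 1 ≤ i → i ≤ j → j ≤ m → b j ≤ b i)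
    (σ : Equiv.Perm (Fin m))
    (hσ : ∀ i : Fin m, b ((((σ⁻¹ : Equiv.Perm (Fin m)) i : Fin m) : ℕ) + 1)
      = b ((i : ℕ) + 1)) :
    act m σ (supervertexDec m b) = supervertexDec m b := by
  have hmono : ∀ a c : ℕ, a ≤ c → c ≤ m + 1 → bext m b c ≤ bext m b a := by
    intro a c hac hcm
    by_cases ha0 : a = 0
    · subst ha0
      rw [bext_zero]
      by_cases hc0 : c = 0
      · rw [hc0, bext_zero]
      · by_cases hcm' : c ≤ m
        · rw [bext_mid m b c (by omega) hcm']
          have := hb c (Finset.mem_Icc.mpr ⟨by omega, hcm'⟩)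
          exact (abs_le.mp this).2
        · have : c = m + 1 := by omega
          rw [this, bext_top]; norm_num
    · by_cases hcm' : c ≤ m
      · have ham : a ≤ m := le_trans hac hcm'
        rw [bext_mid m b a (by omega) ham, bext_mid m b c (by omega) hcm']
        exact hdec a c (by omega) hac hcm'
      · have hc : c = m + 1 := by omega
        subst hc
        rw [bext_top]
        by_cases ham : a ≤ m
        · rw [bext_mid m b a (by omega) ham]
          have := hb a (Finset.mem_Icc.mpr ⟨by omega, ham⟩)
          linarith [(abs_le.mp this).1]
        · have ha : a = m + 1 := by omega
          rw [ha, bext_top]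
  funext lam
  simp only [act, supervertexDec]
  apply Finset.sum_congr rfl
  intro i hi
  rw [Finset.mem_range] at hi
  by_cases hbz : b' m b i = 0
  · simp [hbz]
  · congr 1
    have hle := hmono i (i + 1) (by omega) (by omega)
    have hne : bext m b i ≠ bext m b (i + 1) := by
      intro h
      apply hbz
      simp [b', h]
    have hstrict : bext m b (i + 1) < bext m b i := lt_of_le_of_ne hle (fun h => hne h.symm)
    have hchar : ∀ k : Fin m, (i ≤ (k : ℕ)) ↔ bext m b ((k : ℕ) + 1) ≤ bext m b (i + 1) := by
      intro k
      constructor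
      · intro h
        exact hmono (i + 1) ((k : ℕ) + 1) (by omega) (by have := k.isLt; omega)
      · intro h
        by_contra hik
        push_neg at hik
        have := hmono ((k : ℕ) + 1) i (by omega) (by omega)
        linarith
    have hkey : ∀ k : Fin m, (i ≤ ((σ k : Fin m) : ℕ)) ↔ (i ≤ (k : ℕ)) := by
      intro k
      rw [hchar k, hchar (σ k)]
      have h1 := hσ (σ k)
      simp only [Equiv.Perm.inv_def, Equiv.symm_apply_apply] at h1
      have heq : bext m b (((σ k : Fin m) : ℕ) + 1) = bext m b ((k : ℕ) + 1) := by
        rw [bext_mid m b _ (by omega) (by have := (σ k).isLt; omega),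
          bext_mid m b _ (by omega) (by have := k.isLt; omega)]
        exact h1.symm
      rw [heq]
    have hmu : mu m i ∘ σ = mu m i := by
      funext k
      simp only [Function.comp, mu, decide_eq_decide]
      exact hkey k
    have hiff : (lam ∘ σ = mu m i) ↔ (lam = mu m i) := by
      constructor
      · intro h
        rw [← hmu] at h
        funext k
        have := congrFun h (σ⁻¹ k)
        simpa using this
      · intro h
        rw [h, hmu]
    simp only [hiff]
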